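/- Under the setting of the previous statement, if additionally (1/λ) q Ψ − fᵀ ∇Ψ − ½ Tr((∇²Ψ) Σ) ≤ 0 at a point x with q(x) ≥ 0, then L(V)(x) ≤ −q(x) − (λ/(2Ψ(x)²)) (∇Ψ(x))ᵀ Σ(x) ∇Ψ(x) ≤ 0, where Σ(x) is positive semidefinite. -/

import Mathlib

open Real Matrix

/-- Gradient of a scalar function on `ℝⁿ`. -/
noncomputable def grad (n : ℕ) (V : (Fin n → ℝ) → ℝ) (x : Fin n → ℝ) : Fin n → ℝ :=
  fun i => fderiv ℝ V x (Pi.single i 1)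

/-- Hessian matrix of a scalar function on `ℝⁿ`. -/
noncomputable def hess (n : ℕ) (V : (Fin n → ℝ) → ℝ) (x : Fin n → ℝ) :
    Matrix (Fin n) (Fin n) ℝ :=
  Matrix.of fun i j => fderiv ℝ (fun y => fderiv ℝ V y (Pi.single j 1)) x (Pi.single i 1)

/-- Under the setting of the generator identity, the relaxed HJB inequality
`(1/λ) q Ψ − fᵀ∇Ψ − ½ Tr((∇²Ψ)Σ) ≤ 0` at a point `x` with `q(x) ≥ 0` yields the
Lyapunov decrease condition
`L(V)(x) ≤ −q(x) − (λ/(2Ψ(x)²))(∇Ψ(x))ᵀ Σ(x) ∇Ψ(x) ≤ 0`. -/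
theorem generator_lyapunov_decrease (n m l : ℕ) (lam : ℝ) (hlam : 0 < lam)
    (f : (Fin n → ℝ) → (Fin n → ℝ))
    (G : (Fin n → ℝ) → Matrix (Fin n) (Fin m) ℝ)
    (B : (Fin n → ℝ) → Matrix (Fin n) (Fin l) ℝ)
    (Sige : Matrix (Fin l) (Fin l) ℝ)
    (R : Matrix (Fin m) (Fin m) ℝ) (hR : R.PosDef)
    (Sig : (Fin n → ℝ) → Matrix (Fin n) (Fin n) ℝ)
    (hstruct : ∀ x, lam • (G x * R⁻¹ * (G x)ᵀ) = Sig x)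
    (hSig : ∀ x, B x * Sige * (B x)ᵀ = Sig x)
    (hSigPSD : ∀ x, (Sig x).PosSemidef)
    (Ψ : (Fin n → ℝ) → ℝ) (hΨ : ContDiff ℝ 2 Ψ) (hΨpos : ∀ x, 0 < Ψ x)
    (V : (Fin n → ℝ) → ℝ) (hV : ∀ x, V x = -lam * Real.log (Ψ x))
    (u : (Fin n → ℝ) → (Fin m → ℝ))
    (hu : ∀ x, u x = -((R⁻¹ * (G x)ᵀ).mulVec (grad n V x)))
    (L : (Fin n → ℝ) → ℝ)
    (hL : ∀ x, L x = dotProduct (grad n V x) (f x + (G x).mulVec (u x))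
        + (1 / 2) * (hess n V x * (B x * Sige * (B x)ᵀ)).trace)
    (q : (Fin n → ℝ) → ℝ)
    (x : Fin n → ℝ) (hq : 0 ≤ q x)
    (hHJB : (1 / lam) * q x * Ψ x - dotProduct (f x) (grad n Ψ x)
        - (1 / 2) * (hess n Ψ x * Sig x).trace ≤ 0) :
    L x ≤ -q x - (lam / (2 * (Ψ x) ^ 2)) *
        dotProduct (grad n Ψ x) ((Sig x).mulVec (grad n Ψ x)) ∧
    -q x - (lam / (2 * (Ψ x) ^ 2)) *
        dotProduct (grad n Ψ x) ((Sig x).mulVec (grad n Ψ x)) ≤ 0 := by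
  have hΨd : Differentiable ℝ Ψ := hΨ.differentiable (by norm_num)
  have hΨne : ∀ y, Ψ y ≠ 0 := fun y => ne_of_gt (hΨpos y)
  -- derivative of V
  have hVd : ∀ y, HasFDerivAt V ((-lam * (Ψ y)⁻¹) • fderiv ℝ Ψ y) y := by
    intro y
    have h1 : HasFDerivAt (fun z => Real.log (Ψ z)) ((Ψ y)⁻¹ • fderiv ℝ Ψ y) y := by
      have := (Real.hasDerivAt_log (hΨne y)).comp_hasFDerivAt y (hΨd y).hasFDerivAt
      exact this
    have h2 := h1.const_mul (-lam)
    have hVe : V = fun z => -lam * Real.log (Ψ z) := funext hV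
    rw [hVe, ← smul_smul] ; exact h2
  have hgradV : ∀ y, ∀ i, grad n V y i = (-lam * (Ψ y)⁻¹) * grad n Ψ y i := by
    intro y i
    simp [grad, (hVd y).fderiv]
  -- differentiability of directional derivatives of Ψ
  have hφ : ∀ j : Fin n, Differentiable ℝ (fun y => fderiv ℝ Ψ y (Pi.single j 1)) := by
    intro j
    have h1 : ContDiff ℝ 1 (fderiv ℝ Ψ) := hΨ.fderiv_right (by norm_num)
    exact (h1.clm_apply contDiff_const).differentiable (by norm_num)
  set g : Fin n → ℝ := grad n Ψ x with hg
  set S : Matrix (Fin n) (Fin n) ℝ := Sig x with hS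
  set c : ℝ := -lam * (Ψ x)⁻¹ with hcdef
  -- Hessian of V at x
  have hhessV : ∀ i j, hess n V x i j =
      c * hess n Ψ x i j + lam * ((Ψ x) ^ 2)⁻¹ * (g i * g j) := by
    intro i j
    have hφd := (hφ j x).hasFDerivAt
    have hinv : HasFDerivAt (fun y => (Ψ y)⁻¹)
        ((-((Ψ x) ^ 2)⁻¹) • fderiv ℝ Ψ x) x := by
      have := (hasDerivAt_inv (hΨne x)).comp_hasFDerivAt x (hΨd x).hasFDerivAt
      exact this
    have hfull := (hinv.mul hφd).const_mul (-lam)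
    have heq : (fun y => fderiv ℝ V y (Pi.single j 1))
        = fun y => -lam * ((Ψ y)⁻¹ * fderiv ℝ Ψ y (Pi.single j 1)) := by
      funext y
      rw [(hVd y).fderiv]
      simp [mul_assoc]
    show fderiv ℝ (fun y => fderiv ℝ V y (Pi.single j 1)) x (Pi.single i 1) = _
    rw [heq, (show HasFDerivAt (fun y => -lam * ((Ψ y)⁻¹ * fderiv ℝ Ψ y (Pi.single j 1))) _ x from hfull).fderiv]
    have e1 : hess n Ψ x i j
        = fderiv ℝ (fun y => fderiv ℝ Ψ y (Pi.single j 1)) x (Pi.single i 1) := rfl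
    have e2 : g i = fderiv ℝ Ψ x (Pi.single i 1) := rfl
    have e3 : g j = fderiv ℝ Ψ x (Pi.single j 1) := rfl
    simp only [ContinuousLinearMap.smul_apply, ContinuousLinearMap.add_apply,
      smul_eq_mul, hcdef, ← e1, ← e2, ← e3]
    ring
  -- symmetry of S
  have hSsymm : ∀ i j, S i j = S j i := by
    intro i j
    have h := (hSigPSD x).1
    have := congrFun (congrFun h j) i
    simpa [Matrix.conjTranspose_apply] using this
  -- trace identity
  have htrace : (hess n V x * S).trace
      = c * (hess n Ψ x * S).trace + lam * ((Ψ x) ^ 2)⁻¹ * (g ⬝ᵥ S.mulVec g) := by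
    have key : ∀ i : Fin n, (hess n V x * S) i i
        = c * ((hess n Ψ x * S) i i)
          + lam * ((Ψ x) ^ 2)⁻¹ * (g i * (S.mulVec g) i) := by
      intro i
      simp only [Matrix.mul_apply, Matrix.mulVec, dotProduct, Finset.mul_sum,
        ← Finset.sum_add_distrib]
      refine Finset.sum_congr rfl fun j _ => ?_
      rw [hhessV i j, hSsymm i j]
      ring
    simp only [Matrix.trace, Matrix.diag]
    rw [Finset.sum_congr rfl fun i _ => key i]
    simp only [Finset.sum_add_distrib, Finset.mul_sum, dotProduct]
  -- drift + control term
  have hGu : (G x).mulVec (u x) = -((lam⁻¹ • S).mulVec (grad n V x)) := by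
    rw [hu x, Matrix.mulVec_neg, Matrix.mulVec_mulVec]
    congr 1
    have h := hstruct x
    have : G x * (R⁻¹ * (G x)ᵀ) = lam⁻¹ • S := by
      rw [← Matrix.mul_assoc, hS, ← h, smul_smul, inv_mul_cancel₀ (ne_of_gt hlam), one_smul]
    rw [this]
  have hgradVv : grad n V x = c • g := by
    funext i; rw [hgradV x i]; simp [hcdef, hg]
  have hquad : dotProduct (grad n V x) ((G x).mulVec (u x))
      = -(lam * ((Ψ x) ^ 2)⁻¹) * (g ⬝ᵥ S.mulVec g) := by
    rw [hGu, hgradVv]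
    simp only [dotProduct_neg, Matrix.mulVec_smul, Matrix.smul_mulVec,
      smul_dotProduct, dotProduct_smul, smul_eq_mul]
    rw [hcdef]
    have hl : lam ^ 2 * lam⁻¹ = lam := by
      rw [sq, mul_assoc, mul_inv_cancel₀ (ne_of_gt hlam), mul_one]
    field_simp [ne_of_gt hlam]
  have hdrift : dotProduct (grad n V x) (f x) = c * (g ⬝ᵥ f x) := by
    rw [hgradVv]; simp [smul_dotProduct]
  -- assemble L x
  have hLx : L x = c * ((f x ⬝ᵥ g) + (1/2) * (hess n Ψ x * S).trace)
      - lam * (2 * (Ψ x) ^ 2)⁻¹ * (g ⬝ᵥ S.mulVec g) := by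
    rw [hL x, hSig x, dotProduct_add, hdrift, hquad, htrace, dotProduct_comm]
    have h2 : ((Ψ x) ^ 2) ≠ 0 := pow_ne_zero 2 (hΨne x)
    field_simp
    ring
  have hcneg : c < 0 := by
    rw [hcdef]
    have : 0 < (Ψ x)⁻¹ := inv_pos.mpr (hΨpos x)
    nlinarith
  have hqf : 0 ≤ g ⬝ᵥ S.mulVec g := by
    have := (hSigPSD x).dotProduct_mulVec_nonneg g
    simpa using this
  constructor
  · rw [hLx]
    have hA : (1 / lam) * q x * Ψ x ≤ (f x ⬝ᵥ g) + (1/2) * (hess n Ψ x * S).trace := by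
      linarith [hHJB]
    have hmul : c * ((f x ⬝ᵥ g) + (1/2) * (hess n Ψ x * S).trace)
        ≤ c * ((1 / lam) * q x * Ψ x) := by
      exact mul_le_mul_of_nonpos_left hA (le_of_lt hcneg)
    have hcq : c * ((1 / lam) * q x * Ψ x) = -q x := by
      rw [hcdef]
      field_simp [ne_of_gt hlam, hΨne x]
    have hcoef : lam * (2 * (Ψ x) ^ 2)⁻¹ = lam / (2 * (Ψ x) ^ 2) := by
      rw [div_eq_mul_inv]
    rw [← hcoef]
    linarith [hmul.trans (le_of_eq hcq)]
  · have h1 : 0 ≤ lam / (2 * (Ψ x) ^ 2) := by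
      apply div_nonneg (le_of_lt hlam)
      positivity
    have h2 : 0 ≤ (lam / (2 * (Ψ x) ^ 2)) * (g ⬝ᵥ S.mulVec g) := mul_nonneg h1 hqf
    linarith
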